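/- Let z₁,…,z_n be i.i.d. mean-zero random vectors in ℝ^d with each one-dimensional projection ⟨z, θ⟩ (for unit θ) subexponential with parameter λ, and let Z_i = z₁ + ⋯ + z_i. Then with probability at least 1-δ, max_{i∈[n]} ‖Z_i‖₂ ≤ O(λ√(d n log(2d/δ)) + λ d^{1/2} log(2d/δ)). -/

import Mathlib

open MeasureTheory ProbabilityTheory

/-- A real random variable `z` is `λ`-subexponential in the moment sense:
`sup_{p ≥ 1} p^{-1} (E|z|^p)^{1/p} ≤ λ`. -/
def MomentSubExponential {Ω : Type*} [MeasurableSpace Ω] (μ : Measure Ω) (z : Ω → ℝ)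
    (lam : ℝ) : Prop :=
  ∀ p : ℝ, 1 ≤ p → eLpNorm z (ENNReal.ofReal p) μ ≤ ENNReal.ofReal (p * lam)


open scoped ENNReal NNReal
open Real

lemma aux_pow_le_exp_factorial (p : ℕ) : (p:ℝ)^p ≤ Real.exp 1 ^ p * p.factorial := by
  induction p with
  | zero => simp
  | succ p ih =>
    rcases Nat.eq_zero_or_pos p with rfl | hp
    · simpa using Real.one_le_exp zero_le_one
    have hp' : (0:ℝ) < p := by exact_mod_cast hp
    have h1 : ((p:ℝ)+1)^p ≤ Real.exp 1 * (p:ℝ)^p := by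
      have : ((p:ℝ)+1) ≤ Real.exp (1/p) * p := by
        have := Real.add_one_le_exp (1/(p:ℝ))
        calc ((p:ℝ)+1) = (1/p + 1) * p := by field_simp; ring
        _ ≤ Real.exp (1/p) * p := by
            apply mul_le_mul_of_nonneg_right this hp'.le
      calc ((p:ℝ)+1)^p ≤ (Real.exp (1/p) * p)^p := by
            apply pow_le_pow_left₀ (by positivity) this
      _ = Real.exp (1/p) ^ p * (p:ℝ)^p := mul_pow _ _ _
      _ = Real.exp 1 * (p:ℝ)^p := by
            rw [← Real.exp_nat_mul]
            congr 2
            field_simp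
    calc ((p+1:ℕ):ℝ)^(p+1) = ((p:ℝ)+1)^p * ((p:ℝ)+1) := by push_cast; ring
    _ ≤ (Real.exp 1 * (p:ℝ)^p) * ((p:ℝ)+1) := by
        apply mul_le_mul_of_nonneg_right h1 (by positivity)
    _ ≤ (Real.exp 1 * (Real.exp 1 ^ p * p.factorial)) * ((p:ℝ)+1) := by
        apply mul_le_mul_of_nonneg_right (mul_le_mul_of_nonneg_left ih (Real.exp_pos 1).le) (by positivity)
    _ = Real.exp 1 ^ (p+1) * (p.factorial * ((p:ℝ)+1)) := by ring
    _ = Real.exp 1 ^ (p+1) * (p+1).factorial := by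
        rw [Nat.factorial_succ]
        push_cast
        ring

lemma aux_lintegral_pow {Ω : Type*} [MeasurableSpace Ω] (μ : Measure Ω) (X : Ω → ℝ)
    (lam : ℝ) (hlam : 0 ≤ lam) (hm : MomentSubExponential μ X lam) (p : ℕ) (hp : 1 ≤ p) :
    ∫⁻ ω, (‖X ω‖₊ : ℝ≥0∞) ^ (p:ℕ) ∂μ ≤ ENNReal.ofReal (((p:ℝ)*lam)^(p:ℕ)) := by
  have hp1 : (1:ℝ) ≤ (p:ℝ) := by exact_mod_cast hp
  have hp0 : (0:ℝ) < p := lt_of_lt_of_le zero_lt_one hp1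
  have h := hm p hp1
  rw [eLpNorm_eq_lintegral_rpow_enorm_toReal (by simp [hp0.le, ENNReal.ofReal_eq_zero]; linarith)
    ENNReal.ofReal_ne_top] at h
  rw [ENNReal.toReal_ofReal hp0.le] at h
  have h2 := ENNReal.rpow_le_rpow h (le_of_lt hp0)
  rw [← ENNReal.rpow_mul, one_div, inv_mul_cancel₀ (ne_of_gt hp0), ENNReal.rpow_one] at h2
  simp_rw [← ENNReal.rpow_natCast]
  calc ∫⁻ ω, (‖X ω‖₊ : ℝ≥0∞) ^ ((p:ℝ)) ∂μ ≤ ENNReal.ofReal ((p:ℝ)*lam) ^ (p:ℝ) := h2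
  _ = ENNReal.ofReal (((p:ℝ)*lam)^(p:ℝ)) := by
      rw [← ENNReal.ofReal_rpow_of_nonneg (by positivity) hp0.le]
  _ = ENNReal.ofReal (((p:ℝ)*lam)^(p:ℕ)) := by rw [Real.rpow_natCast]

lemma aux_mgf {Ω : Type*} [MeasurableSpace Ω] (μ : Measure Ω) [IsProbabilityMeasure μ]
    (X : Ω → ℝ) (hX : Measurable X) (lam : ℝ) (hlam : 0 < lam)
    (hm : MomentSubExponential μ X lam) (h0 : ∫ ω, X ω ∂μ = 0)
    (s : ℝ) (hs : 0 ≤ s) (hq : s * (Real.exp 1 * lam) ≤ 1/2) :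
    Integrable (fun ω => Real.exp (s * X ω)) μ ∧
      mgf X μ s ≤ Real.exp (2 * (Real.exp 1 * lam)^2 * s^2) := by
  set q : ℝ := s * (Real.exp 1 * lam) with hqdef
  have hq0 : 0 ≤ q := by positivity
  have hq1 : q < 1 := lt_of_le_of_lt hq (by norm_num)
  set f : ℕ → Ω → ℝ := fun p ω => (s * X ω)^p / p.factorial with hfdef
  -- lintegral bound on each term
  have hterm : ∀ p : ℕ, ∫⁻ ω, (‖f p ω‖₊ : ℝ≥0∞) ∂μ ≤ ENNReal.ofReal (q^p) := by
    intro p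
    have hrw : ∀ ω, (‖f p ω‖₊ : ℝ≥0∞)
        = ENNReal.ofReal (s^p / p.factorial) * (‖X ω‖₊ : ℝ≥0∞)^p := by
      intro ω
      rw [← enorm_eq_nnnorm, ← ofReal_norm, ← enorm_eq_nnnorm, ← ofReal_norm,
        ← ENNReal.ofReal_pow (norm_nonneg _), ← ENNReal.ofReal_mul (by positivity)]
      congr 1
      simp only [hfdef, Real.norm_eq_abs, abs_div, abs_pow, abs_mul]
      rw [abs_of_nonneg hs, abs_of_nonneg (by positivity : (0:ℝ) ≤ (p.factorial:ℝ))]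
      ring
    simp_rw [hrw]
    rw [lintegral_const_mul _ (by measurability)]
    rcases Nat.eq_zero_or_pos p with rfl | hp
    · simp
    have h1 := aux_lintegral_pow μ X lam hlam.le hm p hp
    calc ENNReal.ofReal (s^p / p.factorial) * ∫⁻ ω, (‖X ω‖₊ : ℝ≥0∞)^p ∂μ
        ≤ ENNReal.ofReal (s^p / p.factorial) * ENNReal.ofReal (((p:ℝ)*lam)^p) :=
          mul_le_mul_right h1 _
      _ = ENNReal.ofReal (s^p / p.factorial * ((p:ℝ)*lam)^p) := by
          rw [← ENNReal.ofReal_mul (by positivity)]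
      _ ≤ ENNReal.ofReal (q^p) := by
          apply ENNReal.ofReal_le_ofReal
          have hfac : (0:ℝ) < p.factorial := by exact_mod_cast p.factorial_pos
          have := aux_pow_le_exp_factorial p
          rw [div_mul_eq_mul_div, div_le_iff₀ hfac]
          calc s^p * ((p:ℝ)*lam)^p = (s*lam)^p * (p:ℝ)^p := by rw [mul_pow, mul_pow]; ring
            _ ≤ (s*lam)^p * (Real.exp 1 ^ p * p.factorial) := by
                apply mul_le_mul_of_nonneg_left this (by positivity)
            _ = q^p * p.factorial := by rw [hqdef, mul_pow, mul_pow]; ring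
  have hfmeas : ∀ p : ℕ, Measurable (f p) := by
    intro p; exact ((hX.const_mul s).pow_const p).div_const _
  -- summed lintegral is finite
  have hsum : ∑' p : ℕ, ∫⁻ ω, (‖f p ω‖₊ : ℝ≥0∞) ∂μ ≤ ENNReal.ofReal ((1-q)⁻¹) := by
    calc ∑' p : ℕ, ∫⁻ ω, (‖f p ω‖₊ : ℝ≥0∞) ∂μ ≤ ∑' p : ℕ, ENNReal.ofReal (q^p) :=
        ENNReal.tsum_le_tsum hterm
      _ = ENNReal.ofReal (∑' p : ℕ, q^p) := by
          rw [ENNReal.ofReal_tsum_of_nonneg (fun p => by positivity)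
            (summable_geometric_of_lt_one hq0 hq1)]
      _ = ENNReal.ofReal ((1-q)⁻¹) := by rw [tsum_geometric_of_lt_one hq0 hq1]
  have hsum_ne_top : ∑' p : ℕ, ∫⁻ ω, (‖f p ω‖₊ : ℝ≥0∞) ∂μ ≠ ∞ :=
    ne_top_of_le_ne_top ENNReal.ofReal_ne_top hsum
  -- pointwise series for exp
  have hptw : ∀ x : ℝ, ∑' p : ℕ, x^p / p.factorial = Real.exp x := by
    intro x
    rw [Real.exp_eq_exp_ℝ, NormedSpace.exp_eq_tsum_div]
  -- integrability of exp (s * X)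
  have hexp_meas : Measurable fun ω => Real.exp (s * X ω) := (hX.const_mul s).exp
  have hint_exp : Integrable (fun ω => Real.exp (s * X ω)) μ := by
    refine ⟨hexp_meas.aestronglyMeasurable, ?_⟩
    rw [hasFiniteIntegral_def]
    have hle : ∀ ω, (‖Real.exp (s * X ω)‖₊ : ℝ≥0∞) ≤ ∑' p : ℕ, (‖f p ω‖₊ : ℝ≥0∞) := by
      intro ω
      rw [← enorm_eq_nnnorm, ← ofReal_norm, Real.norm_eq_abs,
        abs_of_pos (Real.exp_pos _)]
      have h1 : Real.exp (s * X ω) ≤ Real.exp |s * X ω| :=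
        Real.exp_le_exp.2 (le_abs_self _)
      have h2 : Real.exp |s * X ω| = ∑' p : ℕ, |s * X ω|^p / p.factorial := (hptw _).symm
      have h3 : ∀ p : ℕ, |s * X ω|^p / p.factorial = ‖f p ω‖ := by
        intro p
        simp only [hfdef, Real.norm_eq_abs, abs_div, abs_pow]
        rw [abs_of_nonneg (by positivity : (0:ℝ) ≤ (p.factorial:ℝ))]
      calc ENNReal.ofReal (Real.exp (s * X ω)) ≤
            ENNReal.ofReal (∑' p : ℕ, |s * X ω|^p / p.factorial) := by
            apply ENNReal.ofReal_le_ofReal; rw [← h2]; exact h1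
        _ = ∑' p : ℕ, ENNReal.ofReal (|s * X ω|^p / p.factorial) := by
            rw [ENNReal.ofReal_tsum_of_nonneg (fun p => by positivity)
              (Real.summable_pow_div_factorial _)]
        _ = ∑' p : ℕ, (‖f p ω‖₊ : ℝ≥0∞) := by
            congr 1; funext p; rw [h3 p, ofReal_norm, enorm_eq_nnnorm]
    calc ∫⁻ ω, (‖Real.exp (s * X ω)‖₊ : ℝ≥0∞) ∂μ
        ≤ ∫⁻ ω, ∑' p : ℕ, (‖f p ω‖₊ : ℝ≥0∞) ∂μ := lintegral_mono hle
      _ = ∑' p : ℕ, ∫⁻ ω, (‖f p ω‖₊ : ℝ≥0∞) ∂μ :=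
          lintegral_tsum (fun p => ((hfmeas p).nnnorm.coe_nnreal_ennreal).aemeasurable)
      _ < ∞ := lt_of_le_of_ne le_top hsum_ne_top
  refine ⟨hint_exp, ?_⟩
  -- swap integral and sum
  have hswap : mgf X μ s = ∑' p : ℕ, ∫ ω, f p ω ∂μ := by
    rw [mgf]
    rw [show (fun ω => Real.exp (s * X ω)) = fun ω => ∑' p : ℕ, f p ω by
      funext ω; rw [← hptw (s * X ω)]]
    exact integral_tsum (fun p => (hfmeas p).aestronglyMeasurable) hsum_ne_top
  set g : ℕ → ℝ := fun p => ∫ ω, f p ω ∂μ with hgdef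
  have hg0 : g 0 = 1 := by
    simp [hgdef, hfdef]
  have hg1 : g 1 = 0 := by
    simp only [hgdef, hfdef, pow_one, Nat.factorial_one, Nat.cast_one, div_one]
    rw [integral_const_mul, h0, mul_zero]
  have hgb : ∀ p : ℕ, |g p| ≤ q^p := by
    intro p
    have h1 : ‖∫ ω, f p ω ∂μ‖ ≤ (∫⁻ ω, ENNReal.ofReal ‖f p ω‖ ∂μ).toReal :=
      norm_integral_le_lintegral_norm _
    rw [Real.norm_eq_abs] at h1
    refine h1.trans ?_
    have h2 : ∫⁻ ω, ENNReal.ofReal ‖f p ω‖ ∂μ ≤ ENNReal.ofReal (q^p) := by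
      simp_rw [ofReal_norm, enorm_eq_nnnorm]; exact hterm p
    calc (∫⁻ ω, ENNReal.ofReal ‖f p ω‖ ∂μ).toReal ≤ (ENNReal.ofReal (q^p)).toReal :=
        ENNReal.toReal_mono ENNReal.ofReal_ne_top h2
      _ = q^p := ENNReal.toReal_ofReal (by positivity)
  have hgsum : Summable g :=
    Summable.of_norm_bounded (summable_geometric_of_lt_one hq0 hq1)
      (fun p => by rw [Real.norm_eq_abs]; exact hgb p)
  have hgsum1 : Summable (fun p => g (p+1)) := (summable_nat_add_iff 1).2 hgsum
  have hgsum2 : Summable (fun p => g (p+2)) := (summable_nat_add_iff 2).2 hgsum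
  have hsplit : ∑' p : ℕ, g p = g 0 + (g 1 + ∑' p : ℕ, g (p+2)) := by
    rw [Summable.tsum_eq_zero_add hgsum]
    congr 1
    rw [Summable.tsum_eq_zero_add hgsum1]
  have htail : ∑' p : ℕ, g (p+2) ≤ 2 * q^2 := by
    have hsq : Summable (fun p : ℕ => q^(p+2)) := by
      apply (summable_nat_add_iff 2).2 (summable_geometric_of_lt_one hq0 hq1)
    calc ∑' p : ℕ, g (p+2) ≤ ∑' p : ℕ, q^(p+2) :=
        Summable.tsum_le_tsum (fun p => (le_abs_self _).trans (hgb (p+2))) hgsum2 hsq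
      _ = q^2 * ∑' p : ℕ, q^p := by
          rw [← tsum_mul_left]; congr 1; funext p; rw [pow_add]; ring
      _ = q^2 * (1-q)⁻¹ := by rw [tsum_geometric_of_lt_one hq0 hq1]
      _ ≤ 2 * q^2 := by
          have h12 : (1-q)⁻¹ ≤ 2 := by
            rw [inv_le_comm₀ (by linarith) (by norm_num)]
            linarith
          nlinarith [mul_le_mul_of_nonneg_left h12 (sq_nonneg q)]
  calc mgf X μ s = g 0 + (g 1 + ∑' p : ℕ, g (p+2)) := by rw [hswap, hsplit]
    _ ≤ 1 + (0 + 2*q^2) := by rw [hg0, hg1]; gcongr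
    _ = 2*q^2 + 1 := by ring
    _ ≤ Real.exp (2*q^2) := Real.add_one_le_exp _
    _ = Real.exp (2 * (Real.exp 1 * lam)^2 * s^2) := by rw [hqdef]; ring_nf

lemma aux_tail {Ω : Type} [MeasurableSpace Ω] (μ : Measure Ω) [IsProbabilityMeasure μ]
    {d n : ℕ} (hn : 0 < n) (z : Fin n → Ω → EuclideanSpace ℝ (Fin d)) (lam : ℝ) (hlam : 0 < lam)
    (hmeas : ∀ i, Measurable (z i))
    (hindep : iIndepFun z μ)
    (hint : ∀ i, Integrable (z i) μ)
    (hzero : ∀ i, ∫ ω, z i ω ∂μ = 0)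
    (hmom : ∀ i (θ : EuclideanSpace ℝ (Fin d)), ‖θ‖ = 1 →
          MomentSubExponential μ (fun ω => (inner ℝ θ (z i ω) : ℝ)) lam)
    (θ : EuclideanSpace ℝ (Fin d)) (hθ : ‖θ‖ = 1) (I : Finset (Fin n))
    (L β : ℝ) (hL : 0 ≤ L)
    (hβ1 : 4 * Real.exp 1 * lam * L ≤ β)
    (hβ2 : 8 * (Real.exp 1 * lam)^2 * n * L ≤ β^2) :
    μ {ω | β ≤ ∑ j ∈ I, (inner ℝ θ (z j ω) : ℝ)} ≤ ENNReal.ofReal (Real.exp (-L)) := by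
  have he : (0:ℝ) < Real.exp 1 := Real.exp_pos 1
  have hβ0 : 0 ≤ β := le_trans (by positivity) hβ1
  set X : Fin n → Ω → ℝ := fun j ω => (inner ℝ θ (z j ω) : ℝ) with hXdef
  have hXmeas : ∀ j, Measurable (X j) := fun j => (measurable_const.inner (hmeas j))
  have hXindep : iIndepFun X μ :=
    hindep.comp (fun j (v : EuclideanSpace ℝ (Fin d)) => (inner ℝ θ v : ℝ))
      (fun j => measurable_const.inner measurable_id)
  have hXzero : ∀ j, ∫ ω, X j ω ∂μ = 0 := by
    intro j
    rw [hXdef]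
    simp only
    rw [integral_inner (hint j) θ, hzero j, inner_zero_right]
  -- choose s
  set a : ℝ := 1/(2 * Real.exp 1 * lam) with hadef
  set b : ℝ := β/(4 * (Real.exp 1 * lam)^2 * n) with hbdef
  have hn' : (0:ℝ) < n := by exact_mod_cast hn
  have ha0 : 0 < a := by positivity
  have hb0 : 0 ≤ b := by positivity
  set s : ℝ := min a b with hsdef
  have hs0 : 0 ≤ s := le_min ha0.le hb0
  have hsa : s ≤ a := min_le_left _ _
  have hsb : s ≤ b := min_le_right _ _
  have hq : s * (Real.exp 1 * lam) ≤ 1/2 := by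
    calc s * (Real.exp 1 * lam) ≤ a * (Real.exp 1 * lam) :=
        mul_le_mul_of_nonneg_right hsa (by positivity)
      _ = 1/2 := by rw [hadef]; field_simp
  have hmgf := fun j => aux_mgf μ (X j) (hXmeas j) lam hlam (hmom j θ hθ) (hXzero j) s hs0 hq
  -- Chernoff
  have hint_sum : Integrable (fun ω => Real.exp (s * (∑ j ∈ I, X j) ω)) μ :=
    hXindep.integrable_exp_mul_sum hXmeas (fun j _ => (hmgf j).1)
  have hcher := measure_ge_le_exp_mul_mgf (X := ∑ j ∈ I, X j) (μ := μ) β hs0 hint_sum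
  have hprod : mgf (∑ j ∈ I, X j) μ s ≤ Real.exp (2 * (Real.exp 1 * lam)^2 * s^2 * n) := by
    rw [hXindep.mgf_sum hXmeas I]
    calc ∏ j ∈ I, mgf (X j) μ s ≤ ∏ _j ∈ I, Real.exp (2 * (Real.exp 1 * lam)^2 * s^2) :=
        Finset.prod_le_prod (fun j _ => mgf_nonneg) (fun j _ => (hmgf j).2)
      _ = Real.exp (2 * (Real.exp 1 * lam)^2 * s^2) ^ I.card := Finset.prod_const _
      _ = Real.exp (2 * (Real.exp 1 * lam)^2 * s^2 * I.card) := by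
          rw [← Real.exp_nat_mul]
          ring_nf
      _ ≤ Real.exp (2 * (Real.exp 1 * lam)^2 * s^2 * n) := by
          apply Real.exp_le_exp.2
          have : (I.card : ℝ) ≤ n := by
            have := I.card_le_univ
            simp only [Finset.card_univ, Fintype.card_fin] at this
            exact_mod_cast this
          apply mul_le_mul_of_nonneg_left this (by positivity)
  -- exponent bound
  have hexpo : -s * β + 2 * (Real.exp 1 * lam)^2 * s^2 * n ≤ -L := by
    have h1 : 2 * (Real.exp 1 * lam)^2 * s^2 * n ≤ s * β / 2 := by
      have : 2 * (Real.exp 1 * lam)^2 * s * n ≤ β / 2 := by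
        calc 2 * (Real.exp 1 * lam)^2 * s * n ≤ 2 * (Real.exp 1 * lam)^2 * b * n := by
              apply mul_le_mul_of_nonneg_right (mul_le_mul_of_nonneg_left hsb (by positivity)) hn'.le
          _ = β / 2 := by rw [hbdef]; field_simp; ring
      calc 2 * (Real.exp 1 * lam)^2 * s^2 * n = (2 * (Real.exp 1 * lam)^2 * s * n) * s := by ring
        _ ≤ (β / 2) * s := mul_le_mul_of_nonneg_right this hs0
        _ = s * β / 2 := by ring
    have h2 : L ≤ s * β / 2 := by
      rcases min_choice a b with hmin | hmin
      · have h3 : s * β = a * β := by rw [hsdef, hmin]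
        rw [h3, hadef, div_mul_eq_mul_div, one_mul, div_div,
          le_div_iff₀ (by positivity)]
        calc L * (2 * Real.exp 1 * lam * 2) = 4 * Real.exp 1 * lam * L := by ring
          _ ≤ β := hβ1
      · have h3 : s * β = b * β := by rw [hsdef, hmin]
        rw [h3, hbdef, div_mul_eq_mul_div, div_div,
          le_div_iff₀ (by positivity)]
        calc L * (4 * (Real.exp 1 * lam)^2 * ↑n * 2) = 8 * (Real.exp 1 * lam)^2 * ↑n * L := by ring
          _ ≤ β^2 := hβ2
          _ = β * β := sq β
    linarith
  -- conclude
  have hset : {ω | β ≤ ∑ j ∈ I, X j ω} = {ω | β ≤ (∑ j ∈ I, X j) ω} := by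
    ext ω; simp [Finset.sum_apply]
  rw [ENNReal.le_ofReal_iff_toReal_le (measure_ne_top μ _) (Real.exp_nonneg _)]
  have : (μ {ω | β ≤ ∑ j ∈ I, X j ω}).toReal ≤ Real.exp (-s * β) *
      Real.exp (2 * (Real.exp 1 * lam)^2 * s^2 * n) := by
    rw [hset]
    exact le_trans hcher (mul_le_mul_of_nonneg_left hprod (Real.exp_nonneg _))
  rw [← Real.exp_add] at this
  exact le_trans this (Real.exp_le_exp.2 hexpo)

lemma aux_vec_tail {Ω : Type} [MeasurableSpace Ω] (μ : Measure Ω) [IsProbabilityMeasure μ]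
    {d n : ℕ} (hd : 0 < d) (hn : 0 < n) (z : Fin n → Ω → EuclideanSpace ℝ (Fin d))
    (lam : ℝ) (hlam : 0 < lam)
    (hmeas : ∀ i, Measurable (z i))
    (hindep : iIndepFun z μ)
    (hint : ∀ i, Integrable (z i) μ)
    (hzero : ∀ i, ∫ ω, z i ω ∂μ = 0)
    (hmom : ∀ i (θ : EuclideanSpace ℝ (Fin d)), ‖θ‖ = 1 →
          MomentSubExponential μ (fun ω => (inner ℝ θ (z i ω) : ℝ)) lam)
    (I : Finset (Fin n)) (L β : ℝ) (hL : 0 ≤ L)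
    (hβ1 : 4 * Real.exp 1 * lam * L ≤ β)
    (hβ2 : 8 * (Real.exp 1 * lam)^2 * n * L ≤ β^2) :
    μ {ω | Real.sqrt d * β ≤ ‖∑ j ∈ I, z j ω‖} ≤
      (d : ℝ≥0∞) * (2 * ENNReal.ofReal (Real.exp (-L))) := by
  have hβ0 : 0 ≤ β := le_trans (by positivity) hβ1
  rcases eq_or_lt_of_le hβ0 with hβz | hβpos
  · -- β = 0, then L = 0 and RHS ≥ 2d ≥ 1
    have hL0 : L = 0 := by
      have h4 : 4 * Real.exp 1 * lam * L ≤ 0 := by rw [hβz]; exact hβ1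
      have : 0 < 4 * Real.exp 1 * lam := by positivity
      nlinarith
    rw [hL0]
    simp only [neg_zero, Real.exp_zero, ENNReal.ofReal_one, mul_one]
    calc μ _ ≤ 1 := prob_le_one
      _ ≤ (d : ℝ≥0∞) * 2 := by
          have : (1 : ℝ≥0∞) ≤ (d : ℝ≥0∞) := by exact_mod_cast Nat.one_le_cast.2 hd
          calc (1:ℝ≥0∞) ≤ (d:ℝ≥0∞) := this
            _ = (d:ℝ≥0∞) * 1 := (mul_one _).symm
            _ ≤ (d:ℝ≥0∞) * 2 := by gcongr; norm_num
  · -- main case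
    set W : Ω → EuclideanSpace ℝ (Fin d) := fun ω => ∑ j ∈ I, z j ω with hWdef
    set θ : Fin d → EuclideanSpace ℝ (Fin d) := fun k => EuclideanSpace.single k (1:ℝ)
      with hθdef
    have hθnorm : ∀ k, ‖θ k‖ = 1 := by
      intro k; rw [hθdef]; simp [EuclideanSpace.norm_single]
    have hθnorm' : ∀ k, ‖-θ k‖ = 1 := by intro k; rw [norm_neg]; exact hθnorm k
    have hinner : ∀ k ω, (∑ j ∈ I, (inner ℝ (θ k) (z j ω) : ℝ)) = W ω k := by
      intro k ω
      rw [hWdef]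
      simp only
      rw [← inner_sum (𝕜 := ℝ)]
      rw [hθdef]
      simp only
      rw [real_inner_comm, EuclideanSpace.inner_single_right]
      simp
    have hinnerneg : ∀ k ω, (∑ j ∈ I, (inner ℝ (-θ k) (z j ω) : ℝ)) = -(W ω k) := by
      intro k ω
      have : ∀ j ω, (inner ℝ (-θ k) (z j ω) : ℝ) = -(inner ℝ (θ k) (z j ω) : ℝ) := by
        intro j ω; rw [inner_neg_left]
      simp_rw [this, Finset.sum_neg_distrib, hinner]
    have hsub : {ω | Real.sqrt d * β ≤ ‖W ω‖} ⊆
        ⋃ k ∈ (Finset.univ : Finset (Fin d)),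
          ({ω | β ≤ ∑ j ∈ I, (inner ℝ (θ k) (z j ω) : ℝ)} ∪
           {ω | β ≤ ∑ j ∈ I, (inner ℝ (-θ k) (z j ω) : ℝ)}) := by
      intro ω hω
      simp only [Set.mem_setOf_eq] at hω
      have hex : ∃ k, β ≤ |W ω k| := by
        by_contra hcon
        push_neg at hcon
        have hlt : ‖W ω‖ < Real.sqrt d * β := by
          rw [EuclideanSpace.norm_eq]
          have hsum : ∑ k, ‖W ω k‖^2 < d * β^2 := by
            have h1 : ∀ k : Fin d, ‖W ω k‖^2 < β^2 := by
              intro k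
              have := hcon k
              rw [Real.norm_eq_abs]
              exact pow_lt_pow_left₀ this (abs_nonneg _) (by norm_num)
            have h2 : ∑ k, ‖W ω k‖^2 < ∑ _k : Fin d, β^2 :=
              Finset.sum_lt_sum_of_nonempty
                (Finset.univ_nonempty_iff.2 (Fin.pos_iff_nonempty.1 hd)) (fun k _ => h1 k)
            have h3 : ∑ _k : Fin d, β^2 = d * β^2 := by
              rw [Finset.sum_const, Finset.card_univ, Fintype.card_fin, nsmul_eq_mul]
            rw [h3] at h2
            exact h2
          have h4 : Real.sqrt (∑ k, ‖W ω k‖^2) < Real.sqrt ((d:ℝ) * β^2) :=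
            Real.sqrt_lt_sqrt (by positivity) hsum
          have h5 : Real.sqrt ((d:ℝ) * β^2) = Real.sqrt d * β := by
            rw [Real.sqrt_mul (by positivity), Real.sqrt_sq hβ0]
          rw [h5] at h4
          exact h4
        exact absurd hω (not_le.2 hlt)
      obtain ⟨k, hk⟩ := hex
      simp only [Set.mem_iUnion, Set.mem_union, Set.mem_setOf_eq, Finset.mem_univ,
        exists_prop, true_and]
      refine ⟨k, ?_⟩
      rcases abs_cases (W ω k) with ⟨habs, _⟩ | ⟨habs, _⟩
      · left; rw [hinner]; rw [habs] at hk; exact hk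
      · right; rw [hinnerneg]; rw [habs] at hk; exact hk
    calc μ {ω | Real.sqrt d * β ≤ ‖W ω‖} ≤
        μ (⋃ k ∈ (Finset.univ : Finset (Fin d)),
          ({ω | β ≤ ∑ j ∈ I, (inner ℝ (θ k) (z j ω) : ℝ)} ∪
           {ω | β ≤ ∑ j ∈ I, (inner ℝ (-θ k) (z j ω) : ℝ)})) := measure_mono hsub
      _ ≤ ∑ k ∈ (Finset.univ : Finset (Fin d)),
          μ ({ω | β ≤ ∑ j ∈ I, (inner ℝ (θ k) (z j ω) : ℝ)} ∪
           {ω | β ≤ ∑ j ∈ I, (inner ℝ (-θ k) (z j ω) : ℝ)}) := measure_biUnion_finset_le _ _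
      _ ≤ ∑ _k ∈ (Finset.univ : Finset (Fin d)), 2 * ENNReal.ofReal (Real.exp (-L)) := by
          apply Finset.sum_le_sum
          intro k _
          calc μ _ ≤ μ {ω | β ≤ ∑ j ∈ I, (inner ℝ (θ k) (z j ω) : ℝ)} +
              μ {ω | β ≤ ∑ j ∈ I, (inner ℝ (-θ k) (z j ω) : ℝ)} := measure_union_le _ _
            _ ≤ ENNReal.ofReal (Real.exp (-L)) + ENNReal.ofReal (Real.exp (-L)) := by
                gcongr
                · exact aux_tail μ hn z lam hlam hmeas hindep hint hzero hmom (θ k)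
                    (hθnorm k) I L β hL hβ1 hβ2
                · exact aux_tail μ hn z lam hlam hmeas hindep hint hzero hmom (-θ k)
                    (hθnorm' k) I L β hL hβ1 hβ2
            _ = 2 * ENNReal.ofReal (Real.exp (-L)) := (two_mul _).symm
      _ = (d : ℝ≥0∞) * (2 * ENNReal.ofReal (Real.exp (-L))) := by
          rw [Finset.sum_const, Finset.card_univ, Fintype.card_fin, nsmul_eq_mul]


/-- Maximal inequality for partial sums of i.i.d. mean-zero `λ`-subexponential
random vectors in `ℝ^d`: with probability at least `1 - δ`,
`max_{i ∈ [n]} ‖Z_i‖₂ ≤ C (λ √(d n log(2d/δ)) + λ √d log(2d/δ))`. -/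
theorem max_partial_sum_subexponential :
    ∃ C : ℝ, 0 < C ∧
      ∀ (Ω : Type) [MeasurableSpace Ω] (μ : Measure Ω) [IsProbabilityMeasure μ]
        (d n : ℕ) (hn : 0 < n) (z : Fin n → Ω → EuclideanSpace ℝ (Fin d)) (lam : ℝ),
        0 ≤ lam →
        (∀ i, Measurable (z i)) →
        iIndepFun z μ →
        (∀ i, Measure.map (z i) μ = Measure.map (z ⟨0, hn⟩) μ) →
        (∀ i, Integrable (z i) μ) →
        (∀ i, ∫ ω, z i ω ∂μ = 0) →
        (∀ i (θ : EuclideanSpace ℝ (Fin d)), ‖θ‖ = 1 →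
          MomentSubExponential μ (fun ω => (inner ℝ θ (z i ω) : ℝ)) lam) →
        ∀ δ : ℝ, 0 < δ → δ < 1 →
          ENNReal.ofReal (1 - δ) ≤
            μ {ω | ∀ i : Fin n,
              ‖∑ j ∈ Finset.univ.filter (fun j => j ≤ i), z j ω‖ ≤
                C * (lam * Real.sqrt (d * n * Real.log (2 * d / δ)) +
                  lam * Real.sqrt d * Real.log (2 * d / δ))} := by
  refine ⟨100, by norm_num, ?_⟩
  intro Ω _ μ _ d n hn z lam hlam hmeas hindep hident hint hzero hmom δ hδ0 hδ1
  have hone_le : ENNReal.ofReal (1 - δ) ≤ 1 := by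
    calc ENNReal.ofReal (1 - δ) ≤ ENNReal.ofReal 1 :=
        ENNReal.ofReal_le_ofReal (by linarith)
      _ = 1 := ENNReal.ofReal_one
  rcases Nat.eq_zero_or_pos d with hd0 | hd
  · -- d = 0 : all norms vanish
    subst hd0
    have hnorm : ∀ (x : EuclideanSpace ℝ (Fin 0)), ‖x‖ = 0 := by
      intro x
      rw [EuclideanSpace.norm_eq]
      simp
    have hset : {ω : Ω | ∀ i : Fin n,
        ‖∑ j ∈ Finset.univ.filter (fun j => j ≤ i), z j ω‖ ≤
          100 * (lam * Real.sqrt ((0:ℕ) * n * Real.log (2 * (0:ℕ) / δ)) +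
            lam * Real.sqrt (0:ℕ) * Real.log (2 * (0:ℕ) / δ))} = Set.univ := by
      ext ω
      simp only [Set.mem_setOf_eq, Set.mem_univ, iff_true]
      intro i
      rw [hnorm]
      push_cast
      simp
    rw [hset, measure_univ]
    exact hone_le
  set Bd : ℝ := 100 * (lam * Real.sqrt (d * n * Real.log (2 * d / δ)) +
      lam * Real.sqrt d * Real.log (2 * d / δ)) with hBddef
  set Z : Fin n → Ω → EuclideanSpace ℝ (Fin d) :=
    fun i ω => ∑ j ∈ Finset.univ.filter (fun j => j ≤ i), z j ω with hZdef
  have hZmeas : ∀ i, Measurable (Z i) := fun i =>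
    Finset.measurable_sum _ (fun j _ => hmeas j)
  rcases eq_or_lt_of_le hlam with hlam0 | hlampos
  · -- lam = 0 : all variables vanish a.e.
    have hzae : ∀ i : Fin n, ∀ᵐ ω ∂μ, z i ω = 0 := by
      intro i
      have hco : ∀ k : Fin d, ∀ᵐ ω ∂μ, (z i ω) k = 0 := by
        intro k
        have h1 := hmom i (EuclideanSpace.single k (1:ℝ))
          (by simp [EuclideanSpace.norm_single]) 1 le_rfl
        rw [← hlam0] at h1
        simp only [mul_zero, ENNReal.ofReal_zero, ENNReal.ofReal_one, nonpos_iff_eq_zero] at h1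
        have h2 := (eLpNorm_eq_zero_iff
          ((measurable_const.inner (hmeas i)).aestronglyMeasurable
            (f := fun ω => (inner ℝ (EuclideanSpace.single k (1:ℝ)) (z i ω) : ℝ)))
          one_ne_zero).1 h1
        filter_upwards [h2] with ω hω
        have : (inner ℝ (EuclideanSpace.single k (1:ℝ)) (z i ω) : ℝ) = 0 := hω
        rwa [EuclideanSpace.inner_single_left, map_one, one_mul] at this
      have := (ae_all_iff.2 hco)
      filter_upwards [this] with ω hω
      apply PiLp.ext
      intro k
      simpa using hω k
    have hall : ∀ᵐ ω ∂μ, ∀ i : Fin n, ‖Z i ω‖ ≤ Bd := by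
      have := ae_all_iff.2 hzae
      filter_upwards [this] with ω hω
      intro i
      have hZ0 : Z i ω = 0 := by
        rw [hZdef]
        simp only
        apply Finset.sum_eq_zero
        intro j _
        exact hω j
      rw [hZ0, norm_zero, hBddef, ← hlam0]
      simp
    have hnull : μ {ω | ¬ ∀ i : Fin n, ‖Z i ω‖ ≤ Bd} = 0 := by
      rw [← ae_iff]; exact hall
    have h1 : (1:ℝ≥0∞) ≤ μ {ω | ∀ i : Fin n, ‖Z i ω‖ ≤ Bd} := by
      have := measure_union_le (μ := μ) {ω | ∀ i : Fin n, ‖Z i ω‖ ≤ Bd}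
        {ω | ¬ ∀ i : Fin n, ‖Z i ω‖ ≤ Bd}
      have hcover : (Set.univ : Set Ω) ⊆
          {ω | ∀ i : Fin n, ‖Z i ω‖ ≤ Bd} ∪ {ω | ¬ ∀ i : Fin n, ‖Z i ω‖ ≤ Bd} := by
        intro ω _
        by_cases h : ∀ i : Fin n, ‖Z i ω‖ ≤ Bd
        · exact Or.inl h
        · exact Or.inr h
      calc (1:ℝ≥0∞) = μ Set.univ := (measure_univ).symm
        _ ≤ μ ({ω | ∀ i : Fin n, ‖Z i ω‖ ≤ Bd} ∪ {ω | ¬ ∀ i : Fin n, ‖Z i ω‖ ≤ Bd}) :=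
            measure_mono hcover
        _ ≤ μ {ω | ∀ i : Fin n, ‖Z i ω‖ ≤ Bd} + μ {ω | ¬ ∀ i : Fin n, ‖Z i ω‖ ≤ Bd} := this
        _ = μ {ω | ∀ i : Fin n, ‖Z i ω‖ ≤ Bd} := by rw [hnull, add_zero]
    exact le_trans hone_le h1
  · -- main case: d ≥ 1, lam > 0
    have hd1 : (1:ℝ) ≤ d := by exact_mod_cast hd
    have hn1 : (1:ℝ) ≤ n := by exact_mod_cast hn
    have he1pos : 0 < Real.exp 1 := Real.exp_pos 1
    have he3 : Real.exp 1 ≤ 3 := by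
      have := Real.exp_one_lt_d9
      linarith
    set L0 : ℝ := Real.log (2 * d / δ) with hL0def
    set L : ℝ := Real.log (4 * d / δ) with hLdef
    have hL0pos : 0 < L0 := by
      rw [hL0def]
      apply Real.log_pos
      rw [lt_div_iff₀ hδ0]
      nlinarith
    have hL : 0 ≤ L := by
      rw [hLdef]
      apply Real.log_nonneg
      rw [le_div_iff₀ hδ0]
      nlinarith
    have hLle : L ≤ 2 * L0 := by
      rw [hLdef, hL0def]
      have h1 : 4 * (d:ℝ) / δ ≤ (2 * d / δ)^2 := by
        rw [div_pow, div_le_div_iff₀ (by positivity) (by positivity)]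
        nlinarith [mul_le_mul_of_nonneg_right (show δ ≤ (d:ℝ) by linarith) hδ0.le, hd1, hδ0]
      calc Real.log (4 * (d:ℝ) / δ) ≤ Real.log ((2 * d / δ)^2) :=
          Real.log_le_log (by positivity) h1
        _ = 2 * Real.log (2 * d / δ) := by
            rw [← Real.rpow_natCast (2 * (d:ℝ) / δ) 2, Real.log_rpow (by positivity)]
            norm_num
    set β : ℝ := 4 * Real.exp 1 * lam * L + Real.sqrt (8 * (Real.exp 1 * lam)^2 * n * L) with hβdef
    have hβ1 : 4 * Real.exp 1 * lam * L ≤ β := by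
      rw [hβdef]
      exact le_add_of_nonneg_right (Real.sqrt_nonneg _)
    have hβ0 : 0 ≤ β := le_trans (by positivity) hβ1
    have hβ2 : 8 * (Real.exp 1 * lam)^2 * n * L ≤ β^2 := by
      have h1 : Real.sqrt (8 * (Real.exp 1 * lam)^2 * n * L) ≤ β := by
        rw [hβdef]
        exact le_add_of_nonneg_left (by positivity)
      have h2 : (Real.sqrt (8 * (Real.exp 1 * lam)^2 * n * L))^2 = 8 * (Real.exp 1 * lam)^2 * n * L :=
        Real.sq_sqrt (by positivity)
      rw [← h2]
      exact pow_le_pow_left₀ (Real.sqrt_nonneg _) h1 2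
    set α : ℝ := Real.sqrt d * β with hαdef
    have hα0 : 0 ≤ α := by positivity
    -- numeric bound : 3α ≤ Bd
    have h3α : 3 * α ≤ Bd := by
      have hsq1 : Real.sqrt (8 * (Real.exp 1 * lam)^2 * n * L) ≤
          4 * (Real.exp 1 * lam) * Real.sqrt (n * L0) := by
        have hle : 8 * (Real.exp 1 * lam)^2 * (n:ℝ) * L ≤ (4 * (Real.exp 1 * lam) * Real.sqrt (n * L0))^2 := by
          have hp : (4 * (Real.exp 1 * lam) * Real.sqrt (n * L0))^2
              = 16 * (Real.exp 1 * lam)^2 * (Real.sqrt (n * L0))^2 := by ring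
          rw [hp, Real.sq_sqrt (by positivity)]
          have : 8 * (Real.exp 1 * lam)^2 * (n:ℝ) * L ≤ 8 * (Real.exp 1 * lam)^2 * n * (2 * L0) := by
            apply mul_le_mul_of_nonneg_left hLle (by positivity)
          calc 8 * (Real.exp 1 * lam)^2 * (n:ℝ) * L
              ≤ 8 * (Real.exp 1 * lam)^2 * n * (2 * L0) := this
            _ = 16 * (Real.exp 1 * lam)^2 * ((n:ℝ) * L0) := by ring
        have hs2 := Real.sqrt_le_sqrt hle
        rwa [Real.sqrt_sq (by positivity)] at hs2
      have hβle : β ≤ 8 * (Real.exp 1 * lam) * L0 + 4 * (Real.exp 1 * lam) * Real.sqrt (n * L0) := by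
        rw [hβdef]
        have h1 : 4 * Real.exp 1 * lam * L ≤ 8 * (Real.exp 1 * lam) * L0 := by
          calc 4 * Real.exp 1 * lam * L
              ≤ 4 * Real.exp 1 * lam * (2 * L0) := mul_le_mul_of_nonneg_left hLle (by positivity)
            _ = 8 * (Real.exp 1 * lam) * L0 := by ring
        exact add_le_add h1 hsq1
      have hsd0 : (0:ℝ) ≤ Real.sqrt d := Real.sqrt_nonneg _
      have hmul : 3 * α ≤ Real.sqrt d * (24 * (Real.exp 1*lam) * L0)
          + Real.sqrt d * (12 * (Real.exp 1*lam) * Real.sqrt (n * L0)) := by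
        rw [hαdef]
        calc 3 * (Real.sqrt d * β)
            ≤ 3 * (Real.sqrt d * (8 * (Real.exp 1 * lam) * L0 + 4 * (Real.exp 1 * lam) * Real.sqrt (n * L0))) :=
              mul_le_mul_of_nonneg_left (mul_le_mul_of_nonneg_left hβle hsd0) (by norm_num)
          _ = Real.sqrt d * (24 * (Real.exp 1*lam) * L0)
              + Real.sqrt d * (12 * (Real.exp 1*lam) * Real.sqrt (n * L0)) := by ring
      have hsdn : Real.sqrt d * Real.sqrt ((n:ℝ) * L0) = Real.sqrt ((d:ℝ) * n * L0) := by
        rw [← Real.sqrt_mul (by positivity : (0:ℝ) ≤ (d:ℝ)), mul_assoc]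
      rw [hBddef]
      have hu0 : 0 ≤ lam * Real.sqrt ((d:ℝ) * n * L0) := by positivity
      have hv0 : 0 ≤ lam * Real.sqrt (d:ℝ) * L0 := by positivity
      have h24 : Real.sqrt d * (24 * (Real.exp 1*lam) * L0) ≤ 72 * (lam * Real.sqrt (d:ℝ) * L0) := by
        have : Real.sqrt d * (24 * (Real.exp 1*lam) * L0) = 24 * Real.exp 1 * (lam * Real.sqrt (d:ℝ) * L0) := by
          ring
        rw [this]
        linarith [mul_le_mul_of_nonneg_right he3 hv0]
      have h12 : Real.sqrt d * (12 * (Real.exp 1*lam) * Real.sqrt (n * L0))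
          ≤ 36 * (lam * Real.sqrt ((d:ℝ) * n * L0)) := by
        have : Real.sqrt d * (12 * (Real.exp 1*lam) * Real.sqrt (n * L0))
            = 12 * Real.exp 1 * (lam * (Real.sqrt d * Real.sqrt ((n:ℝ) * L0))) := by ring
        rw [this, hsdn]
        linarith [mul_le_mul_of_nonneg_right he3 hu0]
      calc 3 * α ≤ Real.sqrt d * (24 * (Real.exp 1*lam) * L0)
          + Real.sqrt d * (12 * (Real.exp 1*lam) * Real.sqrt (n * L0)) := hmul
        _ ≤ 72 * (lam * Real.sqrt (d:ℝ) * L0) + 36 * (lam * Real.sqrt ((d:ℝ) * n * L0)) :=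
            add_le_add h24 h12
        _ ≤ 100 * (lam * Real.sqrt ((d:ℝ) * n * L0) + lam * Real.sqrt (d:ℝ) * L0) := by
            linarith [hu0, hv0]
    -- first-passage events
    set A : Fin n → Set Ω := fun i =>
      {ω | (∀ j, j < i → ‖Z j ω‖ < 3*α) ∧ 3*α ≤ ‖Z i ω‖} with hAdef
    have hAmeas : ∀ i, MeasurableSet (A i) := by
      intro i
      have h1 : A i = (⋂ j ∈ {j : Fin n | j < i}, {ω | ‖Z j ω‖ < 3*α})
          ∩ {ω | 3*α ≤ ‖Z i ω‖} := by
        ext ω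
        simp only [hAdef, Set.mem_setOf_eq, Set.mem_inter_iff, Set.mem_iInter]
      rw [h1]
      exact (MeasurableSet.biInter (Set.to_countable _) (fun j _ =>
        measurableSet_lt (hZmeas j).norm measurable_const)).inter
        (measurableSet_le measurable_const (hZmeas i).norm)
    have hkey : ∀ i i' : Fin n, i < i' → Disjoint (A i) (A i') := by
      intro i i' hii
      rw [Set.disjoint_left]
      intro ω hωi hωi'
      exact absurd (hωi'.1 i hii) (not_lt.2 hωi.2)
    have hApdisj : Pairwise (Function.onFun Disjoint A) := by
      intro i i' hne
      rcases lt_or_gt_of_ne hne with h | h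
      · exact hkey i i' h
      · exact (hkey i' i h).symm
    -- last index
    set N : Fin n := ⟨n-1, by omega⟩ with hNdef
    have hNtop : ∀ j : Fin n, j ≤ N := by
      intro j
      rw [Fin.le_def]
      have := j.isLt
      simp only [hNdef]
      omega
    have hZN : ∀ ω, Z N ω = ∑ j ∈ (Finset.univ : Finset (Fin n)), z j ω := by
      intro ω
      rw [hZdef]
      simp only
      congr 1
      apply Finset.filter_true_of_mem
      intro j _
      exact hNtop j
    -- future-sum events
    set T : Fin n → Finset (Fin n) := fun i => Finset.univ.filter (fun j => i < j) with hTdef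
    set B : Fin n → Set Ω := fun i => {ω | 2*α ≤ ‖∑ j ∈ T i, z j ω‖} with hBdef2
    have hBmeas : ∀ i, MeasurableSet (B i) := by
      intro i
      exact measurableSet_le measurable_const
        (Finset.measurable_sum _ (fun j _ => hmeas j)).norm
    set Cset : Set Ω := {ω | Real.sqrt d * β ≤ ‖∑ j ∈ (Finset.univ : Finset (Fin n)), z j ω‖}
      with hCdef
    -- tail bounds
    have htail_val : (d : ℝ≥0∞) * (2 * ENNReal.ofReal (Real.exp (-L))) =
        ENNReal.ofReal (δ/2) := by
      have hexp : Real.exp (-L) = δ/(4*d) := by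
        rw [hLdef, Real.exp_neg, Real.exp_log (by positivity), inv_div]
      rw [hexp]
      rw [show ((d:ℝ≥0∞)) = ENNReal.ofReal ((d:ℝ)) by rw [ENNReal.ofReal_natCast]]
      rw [show ((2:ℝ≥0∞)) = ENNReal.ofReal ((2:ℝ)) by norm_num]
      rw [← ENNReal.ofReal_mul (by norm_num), ← ENNReal.ofReal_mul (by positivity)]
      congr 1
      have hdne : (d:ℝ) ≠ 0 := by positivity
      field_simp
      ring
    have hC : μ Cset ≤ ENNReal.ofReal (δ/2) := by
      rw [hCdef]
      calc μ {ω | Real.sqrt d * β ≤ ‖∑ j ∈ (Finset.univ : Finset (Fin n)), z j ω‖}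
          ≤ (d : ℝ≥0∞) * (2 * ENNReal.ofReal (Real.exp (-L))) :=
            aux_vec_tail μ hd hn z lam hlampos hmeas hindep hint hzero hmom
              Finset.univ L β hL hβ1 hβ2
        _ = ENNReal.ofReal (δ/2) := htail_val
    have hB : ∀ i, μ (B i) ≤ ENNReal.ofReal (δ/2) := by
      intro i
      have hsub : B i ⊆ {ω | Real.sqrt d * β ≤ ‖∑ j ∈ T i, z j ω‖} := by
        intro ω hω
        simp only [hBdef2, Set.mem_setOf_eq] at hω ⊢
        rw [← hαdef]
        linarith
      calc μ (B i) ≤ μ {ω | Real.sqrt d * β ≤ ‖∑ j ∈ T i, z j ω‖} := measure_mono hsub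
        _ ≤ (d : ℝ≥0∞) * (2 * ENNReal.ofReal (Real.exp (-L))) :=
            aux_vec_tail μ hd hn z lam hlampos hmeas hindep hint hzero hmom
              (T i) L β hL hβ1 hβ2
        _ = ENNReal.ofReal (δ/2) := htail_val
    -- independence of A i and B i
    have hAB : ∀ i, μ (A i ∩ B i) = μ (A i) * μ (B i) := by
      intro i
      set S : Finset (Fin n) := Finset.univ.filter (fun j => j ≤ i) with hSdef
      have hST : Disjoint S (T i) := by
        rw [Finset.disjoint_left]
        intro j hj hj'
        simp only [hSdef, Finset.mem_filter, Finset.mem_univ, true_and] at hj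
        simp only [hTdef, Finset.mem_filter, Finset.mem_univ, true_and] at hj'
        exact absurd hj (not_le.2 hj')
      have hIF := hindep.indepFun_finset S (T i) hST hmeas
      set φm : (∀ _ : {x // x ∈ S}, EuclideanSpace ℝ (Fin d)) →
          (Fin n → EuclideanSpace ℝ (Fin d)) :=
        fun v j => if h : j ∈ S then v ⟨j, h⟩ else 0 with hφdef
      have hφm : Measurable φm := by
        apply measurable_pi_lambda
        intro j
        by_cases h : j ∈ S
        · simp only [hφdef, dif_pos h]
          exact measurable_pi_apply _
        · simp only [hφdef, dif_neg h]
          exact measurable_const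
      set ψm : (∀ _ : {x // x ∈ T i}, EuclideanSpace ℝ (Fin d)) →
          EuclideanSpace ℝ (Fin d) := fun v => ∑ j, v j with hψdef
      have hψm : Measurable ψm := by
        apply Finset.measurable_sum
        intro j _
        exact measurable_pi_apply _
      have hcomp := hIF.comp hφm hψm
      set U : Set (Fin n → EuclideanSpace ℝ (Fin d)) :=
        {w | (∀ j, j < i → ‖∑ k ∈ Finset.univ.filter (fun k => k ≤ j), w k‖ < 3*α)
          ∧ 3*α ≤ ‖∑ k ∈ Finset.univ.filter (fun k => k ≤ i), w k‖} with hUdef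
      have hU : MeasurableSet U := by
        have hgm : ∀ j : Fin n, Measurable
            (fun w : Fin n → EuclideanSpace ℝ (Fin d) =>
              ∑ k ∈ Finset.univ.filter (fun k => k ≤ j), w k) :=
          fun j => Finset.measurable_sum _ (fun k _ => measurable_pi_apply k)
        have h1 : U = (⋂ j ∈ {j : Fin n | j < i},
            {w : Fin n → EuclideanSpace ℝ (Fin d) |
              ‖∑ k ∈ Finset.univ.filter (fun k => k ≤ j), w k‖ < 3*α})
            ∩ {w | 3*α ≤ ‖∑ k ∈ Finset.univ.filter (fun k => k ≤ i), w k‖} := by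
          ext w
          simp only [hUdef, Set.mem_setOf_eq, Set.mem_inter_iff, Set.mem_iInter]
        rw [h1]
        exact (MeasurableSet.biInter (Set.to_countable _) (fun j _ =>
          measurableSet_lt (hgm j).norm measurable_const)).inter
          (measurableSet_le measurable_const (hgm i).norm)
      have hV : MeasurableSet {x : EuclideanSpace ℝ (Fin d) | 2*α ≤ ‖x‖} :=
        measurableSet_le measurable_const measurable_norm
      have hsumeq : ∀ (ω : Ω) (j : Fin n), j ≤ i →
          ∑ k ∈ Finset.univ.filter (fun k => k ≤ j),
            (φm (fun l : {x // x ∈ S} => z l ω)) k = Z j ω := by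
        intro ω j hj
        rw [hZdef]
        simp only
        apply Finset.sum_congr rfl
        intro k hk
        simp only [Finset.mem_filter, Finset.mem_univ, true_and] at hk
        have hkS : k ∈ S := by
          simp only [hSdef, Finset.mem_filter, Finset.mem_univ, true_and]
          exact le_trans hk hj
        simp only [hφdef, dif_pos hkS]
      have hAeq : A i = (fun ω => φm (fun l : {x // x ∈ S} => z l ω)) ⁻¹' U := by
        ext ω
        simp only [hAdef, hUdef, Set.mem_preimage, Set.mem_setOf_eq]
        constructor
        · rintro ⟨h1, h2⟩
          constructor
          · intro j hj
            rw [hsumeq ω j (le_of_lt hj)]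
            exact h1 j hj
          · rw [hsumeq ω i le_rfl]
            exact h2
        · rintro ⟨h1, h2⟩
          constructor
          · intro j hj
            have := h1 j hj
            rwa [hsumeq ω j (le_of_lt hj)] at this
          · rwa [hsumeq ω i le_rfl] at h2
      have hBeq : B i = (fun ω => ψm (fun l : {x // x ∈ T i} => z l ω)) ⁻¹'
          {x : EuclideanSpace ℝ (Fin d) | 2*α ≤ ‖x‖} := by
        ext ω
        simp only [hBdef2, hψdef, Set.mem_preimage, Set.mem_setOf_eq]
        rw [← Finset.sum_coe_sort (T i) (fun l => z l ω)]
      rw [hAeq, hBeq]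
      exact (indepFun_iff_measure_inter_preimage_eq_mul.1 hcomp) U _ hU hV
    -- A i minus B i lands in Cset
    have hAiC : ∀ i, A i ∩ (B i)ᶜ ⊆ A i ∩ Cset := by
      intro i
      rintro ω ⟨hA1, hB1⟩
      refine ⟨hA1, ?_⟩
      simp only [hBdef2, Set.mem_compl_iff, Set.mem_setOf_eq, not_le] at hB1
      have hTeq : T i = Finset.univ.filter (fun j => ¬ j ≤ i) := by
        simp only [hTdef]
        apply Finset.filter_congr
        intro j _
        simp [not_le]
      have hsplit : Z N ω = Z i ω + ∑ j ∈ T i, z j ω := by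
        rw [hZN ω, hZdef, hTeq]
        simp only
        exact (Finset.sum_filter_add_sum_filter_not Finset.univ (fun j => j ≤ i)
          (fun j => z j ω)).symm
      have htri : ‖Z i ω‖ ≤ ‖Z N ω‖ + ‖∑ j ∈ T i, z j ω‖ := by
        have : Z i ω = Z N ω - ∑ j ∈ T i, z j ω := by rw [hsplit]; abel
        rw [this]
        exact norm_sub_le _ _
      have h3 : 3*α ≤ ‖Z i ω‖ := hA1.2
      simp only [hCdef, Set.mem_setOf_eq]
      rw [← hZN ω, ← hαdef]
      linarith
    -- putting it together
    have hCmeas : MeasurableSet Cset :=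
      measurableSet_le measurable_const
        (Finset.measurable_sum _ (fun j _ => hmeas j)).norm
    have hBadmeas : MeasurableSet (⋃ i, A i) := MeasurableSet.iUnion hAmeas
    have hsum_eq : μ (⋃ i, A i) = ∑ i, μ (A i) := by
      rw [measure_iUnion hApdisj hAmeas, tsum_fintype]
    have hsum_le_one : ∑ i, μ (A i) ≤ 1 := by
      rw [← hsum_eq]
      exact prob_le_one
    have hpart2 : ∑ i, μ (A i ∩ Cset) ≤ μ Cset := by
      have hdisj2 : Pairwise (Function.onFun Disjoint (fun i => A i ∩ Cset)) := by
        intro i i' hne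
        exact (hApdisj hne).mono Set.inter_subset_left Set.inter_subset_left
      rw [← tsum_fintype (L := SummationFilter.unconditional _), ← measure_iUnion hdisj2 (fun i => (hAmeas i).inter hCmeas)]
      exact measure_mono (Set.iUnion_subset (fun i => Set.inter_subset_right))
    have hmain : μ (⋃ i, A i) ≤ ENNReal.ofReal δ := by
      calc μ (⋃ i, A i) = ∑ i, μ (A i) := hsum_eq
        _ ≤ ∑ i, (μ (A i ∩ B i) + μ (A i ∩ (B i)ᶜ)) := by
            apply Finset.sum_le_sum
            intro i _
            calc μ (A i) ≤ μ (A i ∩ B i) + μ (A i \ B i) := measure_le_inter_add_diff μ _ _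
              _ = μ (A i ∩ B i) + μ (A i ∩ (B i)ᶜ) := by rw [Set.diff_eq]
        _ = (∑ i, μ (A i ∩ B i)) + ∑ i, μ (A i ∩ (B i)ᶜ) := Finset.sum_add_distrib
        _ ≤ ENNReal.ofReal (δ/2) + ENNReal.ofReal (δ/2) := by
            apply add_le_add
            · calc ∑ i, μ (A i ∩ B i) = ∑ i, μ (A i) * μ (B i) :=
                  Finset.sum_congr rfl (fun i _ => hAB i)
                _ ≤ ∑ i, μ (A i) * ENNReal.ofReal (δ/2) :=
                    Finset.sum_le_sum (fun i _ => mul_le_mul_right (hB i) _)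
                _ = (∑ i, μ (A i)) * ENNReal.ofReal (δ/2) := by
                    rw [Finset.sum_mul]
                _ ≤ 1 * ENNReal.ofReal (δ/2) := mul_le_mul_left hsum_le_one _
                _ = ENNReal.ofReal (δ/2) := one_mul _
            · calc ∑ i, μ (A i ∩ (B i)ᶜ) ≤ ∑ i, μ (A i ∩ Cset) :=
                  Finset.sum_le_sum (fun i _ => measure_mono (hAiC i))
                _ ≤ μ Cset := hpart2
                _ ≤ ENNReal.ofReal (δ/2) := hC
        _ = ENNReal.ofReal δ := by
            rw [← ENNReal.ofReal_add (by linarith) (by linarith)]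
            norm_num
    have hGupset : (⋃ i, A i)ᶜ ⊆ {ω | ∀ i, ‖Z i ω‖ ≤ Bd} := by
      intro ω hω
      simp only [Set.mem_compl_iff, Set.mem_iUnion, not_exists] at hω
      have hall : ∀ i, ‖Z i ω‖ < 3*α := by
        by_contra hc
        push_neg at hc
        obtain ⟨i, hi⟩ := hc
        set sbad : Finset (Fin n) := Finset.univ.filter (fun i => 3*α ≤ ‖Z i ω‖) with hsbad
        have hne : sbad.Nonempty := ⟨i, by simp [hsbad, hi]⟩
        set i0 := sbad.min' hne with hi0
        have hi0mem : i0 ∈ sbad := sbad.min'_mem hne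
        simp only [hsbad, Finset.mem_filter, Finset.mem_univ, true_and] at hi0mem
        apply hω i0
        constructor
        · intro j hj
          by_contra hcj
          push_neg at hcj
          have hjmem : j ∈ sbad := by simp [hsbad, hcj]
          have := sbad.min'_le j hjmem
          rw [← hi0] at this
          exact absurd hj (not_lt.2 this)
        · exact hi0mem
      intro i
      exact le_trans (le_of_lt (hall i)) h3α
    have hfirst : ENNReal.ofReal (1 - δ) ≤ 1 - ENNReal.ofReal δ := by
      rw [ENNReal.ofReal_sub _ hδ0.le, ENNReal.ofReal_one]
    calc ENNReal.ofReal (1 - δ) ≤ 1 - ENNReal.ofReal δ := hfirst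
      _ ≤ 1 - μ (⋃ i, A i) := tsub_le_tsub_left hmain 1
      _ = μ ((⋃ i, A i)ᶜ) := (prob_compl_eq_one_sub hBadmeas).symm
      _ ≤ μ {ω | ∀ i, ‖Z i ω‖ ≤ Bd} := measure_mono hGupset
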